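/- For 0 < α ≤ 1, the function P_α(z) = ((1+z)/(1−z))^α = exp(α Log((1+z)/(1−z))) (principal branch), which is analytic on the unit disk 𝔻, has all Taylor coefficients about z = 0 nonnegative (indeed, real and ≥ 0). -/

import Mathlib

open Complex Metric

namespace PalphaAux

noncomputable def P (α : ℝ) : ℂ → ℂ :=
  fun z : ℂ => Complex.exp ((α : ℂ) * Complex.log ((1 + z) / (1 - z)))

lemma one_sub_ne {z : ℂ} (hz : z ∈ ball (0 : ℂ) 1) : (1 : ℂ) - z ≠ 0 := by
  rw [mem_ball_zero_iff] at hz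
  intro h
  have : z = 1 := by linear_combination -h
  rw [this] at hz; norm_num at hz

lemma one_add_ne {z : ℂ} (hz : z ∈ ball (0 : ℂ) 1) : (1 : ℂ) + z ≠ 0 := by
  rw [mem_ball_zero_iff] at hz
  intro h
  have : z = -1 := by linear_combination h
  rw [this] at hz; norm_num at hz

lemma mem_slit {z : ℂ} (hz : z ∈ ball (0 : ℂ) 1) : (1 + z) / (1 - z) ∈ slitPlane := by
  have h1 := one_sub_ne hz
  rw [mem_ball_zero_iff] at hz
  have hsq : Complex.normSq z < 1 := by
    have h := Complex.normSq_eq_norm_sq z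
    nlinarith [norm_nonneg z]
  rw [Complex.mem_slitPlane_iff]
  left
  rw [Complex.div_re, ← add_div]
  apply div_pos
  · have := Complex.normSq_apply z
    simp only [add_re, one_re, sub_re, add_im, one_im, sub_im, zero_add, zero_sub]
    nlinarith
  · rwa [Complex.normSq_pos]

lemma anaP (α : ℝ) : AnalyticOnNhd ℂ (P α) (ball (0 : ℂ) 1) := by
  apply DifferentiableOn.analyticOnNhd _ isOpen_ball
  intro z hz
  apply DifferentiableAt.differentiableWithinAt
  apply DifferentiableAt.cexp
  apply DifferentiableAt.const_mul
  apply DifferentiableAt.clog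
  · exact ((differentiableAt_const 1).add differentiableAt_id).div
      ((differentiableAt_const 1).sub differentiableAt_id) (one_sub_ne hz)
  · exact mem_slit hz

lemma anaD (α : ℝ) (n : ℕ) : AnalyticOnNhd ℂ (iteratedDeriv n (P α)) (ball (0 : ℂ) 1) := by
  induction n with
  | zero => simpa [iteratedDeriv_zero] using anaP α
  | succ k ih => rw [iteratedDeriv_succ]; exact ih.deriv

lemma hD (α : ℝ) {z : ℂ} (hz : z ∈ ball (0 : ℂ) 1) (k : ℕ) :
    HasDerivAt (iteratedDeriv k (P α)) (iteratedDeriv (k + 1) (P α) z) z := by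
  rw [iteratedDeriv_succ]
  exact ((anaD α k) z hz).differentiableAt.hasDerivAt

lemma ode (α : ℝ) {z : ℂ} (hz : z ∈ ball (0 : ℂ) 1) :
    HasDerivAt (P α) (((α : ℂ) * ((1 + z)⁻¹ + (1 - z)⁻¹)) * P α z) z := by
  have h1 : (1 : ℂ) - z ≠ 0 := one_sub_ne hz
  have h2 : (1 : ℂ) + z ≠ 0 := one_add_ne hz
  have hw : HasDerivAt (fun w : ℂ => (1 + w) / (1 - w)) (2 / (1 - z) ^ 2) z := by
    have := (((hasDerivAt_id z).const_add 1).div ((hasDerivAt_id z).const_sub 1) h1)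
    convert this using 1 <;> try rfl
    simp only [id]
    field_simp
    ring
  have hlog := (hw.clog (mem_slit hz)).const_mul (α : ℂ)
  have := hlog.cexp
  convert this using 1 <;> try rfl
  rw [P]
  field_simp
  ring

lemma rec1 (α : ℝ) (n : ℕ) : ∀ z ∈ ball (0 : ℂ) 1,
    (1 - z ^ 2) * iteratedDeriv (n + 1) (P α) z
      = (2 * (α : ℂ) + 2 * n * z) * iteratedDeriv n (P α) z
        + (n : ℂ) * ((n : ℂ) - 1) * iteratedDeriv (n - 1) (P α) z := by
  induction n with
  | zero =>
    intro z hz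
    have h1 : (1 : ℂ) - z ≠ 0 := one_sub_ne hz
    have h2 : (1 : ℂ) + z ≠ 0 := one_add_ne hz
    have hd := (ode α hz).deriv
    rw [iteratedDeriv_one, iteratedDeriv_zero, hd]
    push_cast
    field_simp
    ring
  | succ k ih =>
    intro z hz
    have hev : (fun w => (1 - w ^ 2) * iteratedDeriv (k + 1) (P α) w)
        =ᶠ[nhds z] (fun w => (2 * (α : ℂ) + 2 * k * w) * iteratedDeriv k (P α) w
          + (k : ℂ) * ((k : ℂ) - 1) * iteratedDeriv (k - 1) (P α) w) := by
      filter_upwards [isOpen_ball.mem_nhds hz] with w hw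
      exact ih w hw
    have hderiv := hev.deriv_eq
    have hpoly : HasDerivAt (fun w : ℂ => 1 - w ^ 2) (-(2 * z)) z := by
      have := (hasDerivAt_pow 2 z).const_sub 1
      convert this using 1 <;> try rfl
      ring
    have hL := hpoly.mul (hD α hz (k + 1))
    have hcoeff : HasDerivAt (fun w : ℂ => 2 * (α : ℂ) + 2 * k * w) (2 * (k : ℂ)) z := by
      have := ((hasDerivAt_id z).const_mul (2 * (k : ℂ))).const_add (2 * (α : ℂ))
      convert this using 1 <;> try rfl
      ring
    have hR := (hcoeff.mul (hD α hz k)).add ((hD α hz (k - 1)).const_mul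
      ((k : ℂ) * ((k : ℂ) - 1)))
    have heq : -(2 * z) * iteratedDeriv (k + 1) (P α) z
        + (1 - z ^ 2) * iteratedDeriv (k + 1 + 1) (P α) z
        = (2 * (k : ℂ) * iteratedDeriv k (P α) z
            + (2 * (α : ℂ) + 2 * k * z) * iteratedDeriv (k + 1) (P α) z)
          + (k : ℂ) * ((k : ℂ) - 1) * iteratedDeriv (k - 1 + 1) (P α) z := by
      rw [← hL.deriv]; exact hderiv.trans hR.deriv
    have hfix : (k : ℂ) * ((k : ℂ) - 1) * iteratedDeriv (k - 1 + 1) (P α) z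
        = (k : ℂ) * ((k : ℂ) - 1) * iteratedDeriv k (P α) z := by
      cases k with
      | zero => norm_num
      | succ m => norm_num
    rw [hfix] at heq
    simp only [Nat.add_sub_cancel]
    push_cast
    linear_combination heq

lemma recvalue (α : ℝ) (n : ℕ) :
    iteratedDeriv (n + 1) (P α) 0
      = 2 * (α : ℂ) * iteratedDeriv n (P α) 0
        + (n : ℂ) * ((n : ℂ) - 1) * iteratedDeriv (n - 1) (P α) 0 := by
  have h := rec1 α n 0 (by simp)
  simpa using h

lemma P_zero (α : ℝ) : P α 0 = 1 := by
  simp [P]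

end PalphaAux

/-- For `0 < α ≤ 1`, the function `P_α(z) = ((1+z)/(1-z))^α` (principal branch) has all
Taylor coefficients about `0` real and nonnegative; equivalently, all iterated derivatives
at `0` are nonnegative reals. -/
theorem Palpha_coeff_nonneg (α : ℝ) (hα0 : 0 < α) (hα1 : α ≤ 1) (n : ℕ) :
    ∃ r : ℝ, 0 ≤ r ∧
      iteratedDeriv n
        (fun z : ℂ => Complex.exp ((α : ℂ) * Complex.log ((1 + z) / (1 - z)))) 0
        = (r : ℂ) := by
  show ∃ r : ℝ, 0 ≤ r ∧ iteratedDeriv n (PalphaAux.P α) 0 = (r : ℂ)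
  induction n using Nat.strong_induction_on with
  | _ n ih =>
    match n with
    | 0 =>
      exact ⟨1, by norm_num, by simp [iteratedDeriv_zero, PalphaAux.P_zero]⟩
    | (k + 1) =>
      obtain ⟨r1, hr1, e1⟩ := ih k (by omega)
      obtain ⟨r2, hr2, e2⟩ := ih (k - 1) (by omega)
      refine ⟨2 * α * r1 + (k : ℝ) * ((k : ℝ) - 1) * r2, ?_, ?_⟩
      · have hk : 0 ≤ (k : ℝ) * ((k : ℝ) - 1) := by
          rcases Nat.eq_zero_or_pos k with h | h
          · simp [h]
          · have h1 : (1 : ℝ) ≤ (k : ℝ) := by exact_mod_cast h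
            nlinarith
        have : 0 ≤ 2 * α * r1 := by positivity
        nlinarith
      · rw [PalphaAux.recvalue, e1, e2]
        push_cast
        ring
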